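/- The type I degree one move preserves transition counts: let ω = (s_1,…,s_T) be a path with s_{t_0} = s_{t_1} = s_{t_2} = i for 1 ≤ t_0 < t_1 < t_2 ≤ T, and let ω' = (s_1,…,s_{t_0−1}, s_{t_1},…,s_{t_2−1}, s_{t_0},…,s_{t_1}, s_{t_2+1},…,s_T) be the path obtained by swapping the two subpath blocks between the occurrences of i. Then ω' is a path of length T with the same number of transitions from j to k as ω for every pair (j,k), and the same initial and final states as ω. -/

import Mathlib

/-- Number of transitions from state `i` to state `j` in the path `ω = (s₁,…,s_T)`
(indexed `0,…,T-1`). -/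
def transCount {S : Type} [DecidableEq S] {T : ℕ} (ω : Fin T → S) (i j : S) : ℕ :=
  (Finset.univ.filter (fun t : Fin (T - 1) =>
    ω ⟨t.1, by have := t.2; omega⟩ = i ∧ ω ⟨t.1 + 1, by have := t.2; omega⟩ = j)).card

/-- Total transition count `b_{ij}(x)` of a contingency table `x`. -/
def transTotal {S : Type} [DecidableEq S] [Fintype S] {T : ℕ}
    (x : (Fin T → S) → ℕ) (i j : S) : ℕ :=
  ∑ ω : Fin T → S, x ω * transCount ω i j

/-- The index map underlying the type I move. -/
def sigIdx (a b c t : ℕ) : ℕ :=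
  if t < a then t else if t < a + (c - b) then b + (t - a)
  else if t < c then t - (c - b) else t

/-- The inverse index map. -/
def tauIdx (a b c t : ℕ) : ℕ :=
  if t < a then t else if t < b then t + (c - b)
  else if t < c then t - (b - a) else t

lemma sig_tau (a b c t : ℕ) (hab : a < b) (hbc : b < c) :
    sigIdx a b c (tauIdx a b c t) = t := by
  unfold sigIdx tauIdx; split_ifs <;> omega

lemma tau_sig (a b c t : ℕ) (hab : a < b) (hbc : b < c) :
    tauIdx a b c (sigIdx a b c t) = t := by
  unfold sigIdx tauIdx; split_ifs <;> omega

/-- the type I degree one move (swapping the two blocks between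
three occurrences of the state `i`, at 0-indexed positions `a < b < c`)
preserves all transition counts and the initial and final states. -/
theorem stmt5 {S : Type} [DecidableEq S] {T : ℕ} (hT : 3 ≤ T)
    (ω : Fin T → S) (a b c : ℕ) (hab : a < b) (hbc : b < c) (hc : c ≤ T - 1)
    (i : S)
    (ha : ω ⟨a, by omega⟩ = i) (hb : ω ⟨b, by omega⟩ = i)
    (hcc : ω ⟨c, by omega⟩ = i)
    (ω' : Fin T → S)
    (hω' : ∀ m : Fin T,
      ω' m = if h1 : (m : ℕ) < a then ω m
        else if h2 : (m : ℕ) < a + (c - b)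
          then ω ⟨b + ((m : ℕ) - a), by have := m.2; omega⟩
        else if h3 : (m : ℕ) ≤ c
          then ω ⟨(m : ℕ) - (c - b), by have := m.2; omega⟩
        else ω m) :
    (∀ j k : S, transCount ω' j k = transCount ω j k) ∧
    ω' ⟨0, by omega⟩ = ω ⟨0, by omega⟩ ∧
    ω' ⟨T - 1, by omega⟩ = ω ⟨T - 1, by omega⟩ := by
  have valI : ∀ x (hx : x < T), (x = a ∨ x = b ∨ x = c) → ω ⟨x, hx⟩ = i := by
    rintro x hx (rfl | rfl | rfl)
    · exact ha
    · exact hb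
    · exact hcc
  have hσlt : ∀ t, t < T → sigIdx a b c t < T := by
    intro t ht; unfold sigIdx; split_ifs <;> omega
  have hσlt2 : ∀ t, t < T - 1 → sigIdx a b c t < T - 1 := by
    intro t ht; unfold sigIdx; split_ifs <;> omega
  have hτlt2 : ∀ t, t < T - 1 → tauIdx a b c t < T - 1 := by
    intro t ht; unfold tauIdx; split_ifs <;> omega
  -- pointwise description of ω'
  have key : ∀ n (hn : n < T), ω' ⟨n, hn⟩ = ω ⟨sigIdx a b c n, hσlt n hn⟩ := by
    intro n hn
    rw [hω' ⟨n, hn⟩]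
    unfold sigIdx
    simp only
    split_ifs with h1 h2 h3 h4 <;>
      first
        | rfl
        | (apply congrArg; exact Fin.ext (by simp; omega))
        | (rw [valI _ _ (by omega), valI _ _ (by omega)])
  -- shifting by one inside the index map
  have arith : ∀ n, n < T - 1 →
      sigIdx a b c (n + 1) = sigIdx a b c n + 1 ∨
      ((sigIdx a b c (n + 1) = a ∨ sigIdx a b c (n + 1) = b ∨
          sigIdx a b c (n + 1) = c) ∧
        (sigIdx a b c n + 1 = a ∨ sigIdx a b c n + 1 = b ∨
          sigIdx a b c n + 1 = c)) := by
    intro n hn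
    unfold sigIdx
    split_ifs <;> omega
  have key2 : ∀ n (hn : n < T - 1),
      ω ⟨sigIdx a b c (n + 1), hσlt _ (by omega)⟩ =
        ω ⟨sigIdx a b c n + 1, by have := hσlt2 n hn; omega⟩ := by
    intro n hn
    rcases arith n hn with h | ⟨h1, h2⟩
    · apply congrArg; exact Fin.ext (by simp [h])
    · rw [valI _ _ h1, valI _ _ h2]
  refine ⟨?_, ?_, ?_⟩
  · intro j k
    unfold transCount
    apply Finset.card_nbij'
      (fun t : Fin (T-1) => (⟨sigIdx a b c t.1, hσlt2 t.1 t.2⟩ : Fin (T-1)))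
      (fun u : Fin (T-1) => (⟨tauIdx a b c u.1, hτlt2 u.1 u.2⟩ : Fin (T-1)))
    · intro t ht
      simp only [Finset.coe_filter, Set.mem_setOf_eq, Finset.mem_filter, Finset.mem_univ, true_and] at ht ⊢
      rw [key t.1 (by omega), key (t.1+1) (by omega), key2 t.1 t.2] at ht
      exact ht
    · intro u hu
      simp only [Finset.coe_filter, Set.mem_setOf_eq, Finset.mem_filter, Finset.mem_univ, true_and] at hu ⊢
      rw [key (tauIdx a b c u.1) (by have := hτlt2 u.1 u.2; omega),
        key (tauIdx a b c u.1 + 1) (by have := hτlt2 u.1 u.2; omega),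
        key2 (tauIdx a b c u.1) (hτlt2 u.1 u.2)]
      have hst : sigIdx a b c (tauIdx a b c u.1) = u.1 := sig_tau a b c u.1 hab hbc
      constructor
      · rw [show (⟨sigIdx a b c (tauIdx a b c u.1), _⟩ : Fin T) =
          ⟨u.1, by omega⟩ from Fin.ext (by simp [hst])]
        exact hu.1
      · rw [show (⟨sigIdx a b c (tauIdx a b c u.1) + 1, _⟩ : Fin T) =
          ⟨u.1 + 1, by omega⟩ from Fin.ext (by simp [hst])]
        exact hu.2
    · intro t _
      exact Fin.ext (by simpa using tau_sig a b c t.1 hab hbc)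
    · intro u _
      exact Fin.ext (by simpa using sig_tau a b c u.1 hab hbc)
  · rw [key 0 (by omega)]
    rcases Nat.eq_zero_or_pos a with h0 | h0
    · subst h0
      rw [valI _ _ (by unfold sigIdx; split_ifs <;> omega), ha]
    · apply congrArg; exact Fin.ext (by simp [sigIdx]; omega)
  · rw [key (T-1) (by omega)]
    apply congrArg; exact Fin.ext (by simp [sigIdx]; split_ifs <;> omega)
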